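/- Let a, b, c be positive real numbers. Then the matrices B(a,b,c) and T(a,b,c) commute entrywise: for all j, k ∈ ℤ≥0, −sqrt(j(j+a−1)(j+b−1)(j+c−1))·B(a,b,c)_{j−1,k} + (j(j+c−1)+(j+a)(j+b))·B(a,b,c)_{j,k} − sqrt((j+1)(j+a)(j+b)(j+c))·B(a,b,c)_{j+1,k} = −sqrt(k(k+a−1)(k+b−1)(k+c−1))·B(a,b,c)_{j,k−1} + (k(k+c−1)+(k+a)(k+b))·B(a,b,c)_{j,k} − sqrt((k+1)(k+a)(k+b)(k+c))·B(a,b,c)_{j,k+1}, where terms containing an index −1 are interpreted as 0. -/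

import Mathlib

/-- The entries of the weighted Hankel matrix `B(a,b,c)`. -/
noncomputable def Bent (a b c : ℝ) (j k : ℕ) : ℝ :=
  (Real.Gamma ((j : ℝ) + k + a) / Real.Gamma ((j : ℝ) + k + b + c)) *
    Real.sqrt (Real.Gamma ((j : ℝ) + b) * Real.Gamma ((j : ℝ) + c) *
        Real.Gamma ((k : ℝ) + b) * Real.Gamma ((k : ℝ) + c) /
      (Real.Gamma ((j : ℝ) + a) * (Nat.factorial j) *
        Real.Gamma ((k : ℝ) + a) * (Nat.factorial k)))

noncomputable def Wf (a b c : ℝ) (j : ℕ) : ℝ :=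
  Real.sqrt (Real.Gamma ((j : ℝ) + b) * Real.Gamma ((j : ℝ) + c) /
    (Real.Gamma ((j : ℝ) + a) * (Nat.factorial j)))

noncomputable def Pf (a b c x n : ℝ) : ℝ :=
  -(x * (x + a - 1)) * (Real.Gamma (n + a - 1) / Real.Gamma (n + b + c - 1))
  + (x * (x + c - 1) + (x + a) * (x + b)) * (Real.Gamma (n + a) / Real.Gamma (n + b + c))
  - (x + b) * (x + c) * (Real.Gamma (n + 1 + a) / Real.Gamma (n + 1 + b + c))

lemma gpos (a : ℝ) (ha : 0 < a) (j : ℕ) : 0 < Real.Gamma ((j : ℝ) + a) :=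
  Real.Gamma_pos_of_pos (by positivity)

lemma Bent_eq (a b c : ℝ) (ha : 0 < a) (hb : 0 < b) (hc : 0 < c) (j k : ℕ) :
    Bent a b c j k = Real.Gamma ((j : ℝ) + k + a) / Real.Gamma ((j : ℝ) + k + b + c) *
      (Wf a b c j * Wf a b c k) := by
  have h1 := gpos a ha j; have h2 := gpos a ha k
  have h3 : (0:ℝ) < (Nat.factorial j : ℝ) := by exact_mod_cast j.factorial_pos
  have h4 : (0:ℝ) < (Nat.factorial k : ℝ) := by exact_mod_cast k.factorial_pos
  have h5 := gpos b hb j; have h6 := gpos c hc j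
  unfold Bent Wf
  rw [← Real.sqrt_mul (by positivity)]
  congr 2
  field_simp

lemma Bent_symm (a b c : ℝ) (j k : ℕ) : Bent a b c j k = Bent a b c k j := by
  unfold Bent
  rw [show ((j:ℝ) + k + a) = ((k:ℝ) + j + a) by ring,
    show ((j:ℝ) + k + b + c) = ((k:ℝ) + j + b + c) by ring,
    show (Real.Gamma ((j : ℝ) + b) * Real.Gamma ((j : ℝ) + c) *
        Real.Gamma ((k : ℝ) + b) * Real.Gamma ((k : ℝ) + c) /
      (Real.Gamma ((j : ℝ) + a) * (Nat.factorial j) *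
        Real.Gamma ((k : ℝ) + a) * (Nat.factorial k)))
      = (Real.Gamma ((k : ℝ) + b) * Real.Gamma ((k : ℝ) + c) *
        Real.Gamma ((j : ℝ) + b) * Real.Gamma ((j : ℝ) + c) /
      (Real.Gamma ((k : ℝ) + a) * (Nat.factorial k) *
        Real.Gamma ((j : ℝ) + a) * (Nat.factorial j))) by ring]

lemma Lup (a b c : ℝ) (ha : 0 < a) (hb : 0 < b) (hc : 0 < c) (j : ℕ) :
    Real.sqrt (((j:ℝ) + 1) * ((j:ℝ) + a) * ((j:ℝ) + b) * ((j:ℝ) + c)) * Wf a b c (j+1)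
      = ((j:ℝ) + b) * ((j:ℝ) + c) * Wf a b c j := by
  have h1 := gpos a ha j; have h2 := gpos b hb j; have h3 := gpos c hc j
  have h4 : (0:ℝ) < (Nat.factorial j : ℝ) := by exact_mod_cast j.factorial_pos
  have h5 : (0:ℝ) < (j:ℝ) + 1 := by positivity
  unfold Wf
  rw [← Real.sqrt_mul (by positivity)]
  rw [show (((j:ℝ) + 1) * ((j:ℝ) + a) * ((j:ℝ) + b) * ((j:ℝ) + c)) *
      (Real.Gamma (((j+1 : ℕ) : ℝ) + b) * Real.Gamma (((j+1 : ℕ) : ℝ) + c) /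
        (Real.Gamma (((j+1 : ℕ) : ℝ) + a) * (Nat.factorial (j+1))))
      = (((j:ℝ) + b) * ((j:ℝ) + c))^2 *
        (Real.Gamma ((j : ℝ) + b) * Real.Gamma ((j : ℝ) + c) /
          (Real.Gamma ((j : ℝ) + a) * (Nat.factorial j))) by
    push_cast
    rw [show (j:ℝ) + 1 + b = ((j:ℝ) + b) + 1 by ring, Real.Gamma_add_one (by positivity : (0:ℝ) < (j:ℝ) + b).ne',
      show (j:ℝ) + 1 + c = ((j:ℝ) + c) + 1 by ring, Real.Gamma_add_one (by positivity : (0:ℝ) < (j:ℝ) + c).ne',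
      show (j:ℝ) + 1 + a = ((j:ℝ) + a) + 1 by ring, Real.Gamma_add_one (by positivity : (0:ℝ) < (j:ℝ) + a).ne',
      Nat.factorial_succ]
    push_cast
    field_simp]
  rw [Real.sqrt_mul (by positivity), Real.sqrt_sq (by positivity)]

lemma Ldown (a b c : ℝ) (ha : 0 < a) (hb : 0 < b) (hc : 0 < c) (j : ℕ) :
    Real.sqrt (((j:ℝ) + 1) * ((j:ℝ) + a) * ((j:ℝ) + b) * ((j:ℝ) + c)) * Wf a b c j
      = ((j:ℝ) + 1) * ((j:ℝ) + a) * Wf a b c (j+1) := by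
  have h1 := gpos a ha j; have h2 := gpos b hb j; have h3 := gpos c hc j
  have h4 : (0:ℝ) < (Nat.factorial j : ℝ) := by exact_mod_cast j.factorial_pos
  have h5 : (0:ℝ) < (j:ℝ) + 1 := by positivity
  unfold Wf
  rw [← Real.sqrt_mul (by positivity)]
  rw [show (((j:ℝ) + 1) * ((j:ℝ) + a) * ((j:ℝ) + b) * ((j:ℝ) + c)) *
      (Real.Gamma ((j : ℝ) + b) * Real.Gamma ((j : ℝ) + c) /
          (Real.Gamma ((j : ℝ) + a) * (Nat.factorial j)))
      = (((j:ℝ) + 1) * ((j:ℝ) + a))^2 *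
        (Real.Gamma (((j+1 : ℕ) : ℝ) + b) * Real.Gamma (((j+1 : ℕ) : ℝ) + c) /
        (Real.Gamma (((j+1 : ℕ) : ℝ) + a) * (Nat.factorial (j+1)))) by
    push_cast
    rw [show (j:ℝ) + 1 + b = ((j:ℝ) + b) + 1 by ring, Real.Gamma_add_one (by positivity : (0:ℝ) < (j:ℝ) + b).ne',
      show (j:ℝ) + 1 + c = ((j:ℝ) + c) + 1 by ring, Real.Gamma_add_one (by positivity : (0:ℝ) < (j:ℝ) + c).ne',
      show (j:ℝ) + 1 + a = ((j:ℝ) + a) + 1 by ring, Real.Gamma_add_one (by positivity : (0:ℝ) < (j:ℝ) + a).ne',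
      Nat.factorial_succ]
    push_cast
    field_simp]
  rw [Real.sqrt_mul (by positivity), Real.sqrt_sq (by positivity)]

lemma Psymm (a b c x y : ℝ) (ha : 0 < a) (hb : 0 < b) (hc : 0 < c)
    (hxy : 1 ≤ x + y) :
    Pf a b c x (x + y) = Pf a b c y (x + y) := by
  have h1 : (0:ℝ) < x + y + a - 1 := by linarith
  have h2 : (0:ℝ) < x + y + b + c - 1 := by linarith
  have h3 : (0:ℝ) < x + y + a := by linarith
  have h4 : (0:ℝ) < x + y + b + c := by linarith
  have hga : Real.Gamma (x + y + a) = (x + y + a - 1) * Real.Gamma (x + y + a - 1) := by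
    rw [show x + y + a = (x + y + a - 1) + 1 by ring, Real.Gamma_add_one h1.ne']; ring_nf
  have hga1 : Real.Gamma (x + y + 1 + a) = (x + y + a) * Real.Gamma (x + y + a) := by
    rw [show x + y + 1 + a = (x + y + a) + 1 by ring, Real.Gamma_add_one h3.ne']
  have hgb : Real.Gamma (x + y + b + c) = (x + y + b + c - 1) * Real.Gamma (x + y + b + c - 1) := by
    rw [show x + y + b + c = (x + y + b + c - 1) + 1 by ring, Real.Gamma_add_one h2.ne']; ring_nf
  have hgb1 : Real.Gamma (x + y + 1 + b + c) = (x + y + b + c) * Real.Gamma (x + y + b + c) := by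
    rw [show x + y + 1 + b + c = (x + y + b + c) + 1 by ring, Real.Gamma_add_one h4.ne']
  have hne : Real.Gamma (x + y + b + c - 1) ≠ 0 := (Real.Gamma_pos_of_pos h2).ne'
  unfold Pf
  rw [hga1, hgb1, hga, hgb]
  field_simp
  ring

lemma side (a b c : ℝ) (ha : 0 < a) (hb : 0 < b) (hc : 0 < c) (j k : ℕ) :
    (if j = 0 then 0 else
        -Real.sqrt ((j : ℝ) * ((j : ℝ) + a - 1) * ((j : ℝ) + b - 1) * ((j : ℝ) + c - 1)) *
          Bent a b c (j - 1) k)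
      + ((j : ℝ) * ((j : ℝ) + c - 1) + ((j : ℝ) + a) * ((j : ℝ) + b)) * Bent a b c j k
      - Real.sqrt (((j : ℝ) + 1) * ((j : ℝ) + a) * ((j : ℝ) + b) * ((j : ℝ) + c)) *
          Bent a b c (j + 1) k
    = Pf a b c (j : ℝ) ((j : ℝ) + (k : ℝ)) * (Wf a b c j * Wf a b c k) := by
  cases j with
  | zero =>
    have e0 := Bent_eq a b c ha hb hc 0 k
    have e1 := Bent_eq a b c ha hb hc 1 k
    have hup := Lup a b c ha hb hc 0
    norm_num at e0 e1 hup ⊢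
    unfold Pf
    norm_num
    rw [e0, e1]
    rw [show (k:ℝ) + 1 + a = 1 + (k:ℝ) + a by ring,
      show (k:ℝ) + 1 + b + c = 1 + (k:ℝ) + b + c by ring]
    linear_combination
      (-(Real.Gamma (1 + (k:ℝ) + a) / Real.Gamma (1 + (k:ℝ) + b + c)) * Wf a b c k) * hup
  | succ m =>
    have e0 := Bent_eq a b c ha hb hc m k
    have e1 := Bent_eq a b c ha hb hc (m+1) k
    have e2 := Bent_eq a b c ha hb hc (m+1+1) k
    have hdown := Ldown a b c ha hb hc m
    have hup := Lup a b c ha hb hc (m+1)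
    simp only [Nat.add_sub_cancel, Nat.succ_ne_zero, if_false]
    push_cast at e0 e1 e2 hdown hup ⊢
    unfold Pf
    rw [show ((m:ℝ) + 1) * ((m:ℝ) + 1 + a - 1) * ((m:ℝ) + 1 + b - 1) * ((m:ℝ) + 1 + c - 1)
        = ((m:ℝ) + 1) * ((m:ℝ) + a) * ((m:ℝ) + b) * ((m:ℝ) + c) by ring,
      show (m:ℝ) + 1 + (k:ℝ) + a - 1 = (m:ℝ) + (k:ℝ) + a by ring,
      show (m:ℝ) + 1 + (k:ℝ) + b + c - 1 = (m:ℝ) + (k:ℝ) + b + c by ring,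
      show (m:ℝ) + 1 + (k:ℝ) + 1 + a = (m:ℝ) + 1 + 1 + (k:ℝ) + a by ring,
      show (m:ℝ) + 1 + (k:ℝ) + 1 + b + c = (m:ℝ) + 1 + 1 + (k:ℝ) + b + c by ring]
    rw [e0, e1, e2]
    linear_combination
      (-(Real.Gamma ((m:ℝ) + (k:ℝ) + a) / Real.Gamma ((m:ℝ) + (k:ℝ) + b + c)) * Wf a b c k) * hdown
      + (-(Real.Gamma ((m:ℝ) + 1 + 1 + (k:ℝ) + a) / Real.Gamma ((m:ℝ) + 1 + 1 + (k:ℝ) + b + c)) * Wf a b c k) * hup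

/-- The Jacobi matrix `T(a,b,c)` commutes with `B(a,b,c)`, entrywise. -/
theorem jacobi_commutes (a b c : ℝ) (ha : 0 < a) (hb : 0 < b) (hc : 0 < c) (j k : ℕ) :
    (if j = 0 then 0 else
        -Real.sqrt ((j : ℝ) * ((j : ℝ) + a - 1) * ((j : ℝ) + b - 1) * ((j : ℝ) + c - 1)) *
          Bent a b c (j - 1) k)
      + ((j : ℝ) * ((j : ℝ) + c - 1) + ((j : ℝ) + a) * ((j : ℝ) + b)) * Bent a b c j k
      - Real.sqrt (((j : ℝ) + 1) * ((j : ℝ) + a) * ((j : ℝ) + b) * ((j : ℝ) + c)) *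
          Bent a b c (j + 1) k
    = (if k = 0 then 0 else
        -Real.sqrt ((k : ℝ) * ((k : ℝ) + a - 1) * ((k : ℝ) + b - 1) * ((k : ℝ) + c - 1)) *
          Bent a b c j (k - 1))
      + ((k : ℝ) * ((k : ℝ) + c - 1) + ((k : ℝ) + a) * ((k : ℝ) + b)) * Bent a b c j k
      - Real.sqrt (((k : ℝ) + 1) * ((k : ℝ) + a) * ((k : ℝ) + b) * ((k : ℝ) + c)) *
          Bent a b c j (k + 1) := by
  by_cases h00 : j = 0 ∧ k = 0
  · obtain ⟨rfl, rfl⟩ := h00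
    rw [Bent_symm a b c (0 + 1) 0]
  · have hjk : 1 ≤ j + k := by omega
    have hr : (if k = 0 then 0 else
        -Real.sqrt ((k : ℝ) * ((k : ℝ) + a - 1) * ((k : ℝ) + b - 1) * ((k : ℝ) + c - 1)) *
          Bent a b c j (k - 1))
      + ((k : ℝ) * ((k : ℝ) + c - 1) + ((k : ℝ) + a) * ((k : ℝ) + b)) * Bent a b c j k
      - Real.sqrt (((k : ℝ) + 1) * ((k : ℝ) + a) * ((k : ℝ) + b) * ((k : ℝ) + c)) *
          Bent a b c j (k + 1)
        = Pf a b c (k : ℝ) ((k : ℝ) + (j : ℝ)) * (Wf a b c k * Wf a b c j) := by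
      rw [Bent_symm a b c j (k - 1), Bent_symm a b c j k, Bent_symm a b c j (k + 1)]
      exact side a b c ha hb hc k j
    rw [side a b c ha hb hc j k, hr,
      show (k : ℝ) + (j : ℝ) = (j : ℝ) + (k : ℝ) by ring,
      Psymm a b c (j : ℝ) (k : ℝ) ha hb hc (by exact_mod_cast hjk)]
    ring
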